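/- Let L, M, N be positive integers and let g_0, …, g_{L−1} ∈ ℓ²(ℤ²,ℍ) be such that G(g,L,M,N) is a Parseval frame for ℓ²(ℤ²,ℍ). Then G(g,L,M,N) is an orthonormal system (i.e. ⟨E_{m/M}T_{nN}g_l, E_{m'/M}T_{n'N}g_{l'}⟩ = 1 if (l,n,m) = (l',n',m') and = 0 otherwise) if and only if N² = L·M². -/

import Mathlib

noncomputable section

open scoped Real

/-- The real quaternions. -/
abbrev ℍ : Type := Quaternion ℝ

/-- `e_i θ = cos θ + (sin θ) i`. -/
def eI (θ : ℝ) : ℍ := ⟨Real.cos θ, Real.sin θ, 0, 0⟩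

/-- `e_j θ = cos θ + (sin θ) j`. -/
def eJ (θ : ℝ) : ℍ := ⟨Real.cos θ, 0, Real.sin θ, 0⟩

/-- Quaternionic pairing `⟨f,g⟩ = ∑ conj (f k) * g k`. -/
def qpair (f g : ℤ × ℤ → ℍ) : ℍ := ∑' k : ℤ × ℤ, star (f k) * g k

/-- Membership in `ℓ²(ℤ², ℍ)`. -/
def MemL2 (f : ℤ × ℤ → ℍ) : Prop := Summable fun k : ℤ × ℤ => ‖f k‖ ^ 2

/-- `‖f‖² = ∑ |f k|²`. -/
def normSq2 (f : ℤ × ℤ → ℍ) : ℝ := ∑' k : ℤ × ℤ, ‖f k‖ ^ 2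

/-- A window is real-valued if all its values lie in `ℝ ⊆ ℍ`. -/
def IsRealValued (f : ℤ × ℤ → ℍ) : Prop := ∀ k : ℤ × ℤ, f k = ((f k).re : ℍ)

/-- The Gabor atom `E_{m/M} T_{nN} w`. -/
def gaborAtom (M N : ℕ) (w : ℤ × ℤ → ℍ) (m : ℕ × ℕ) (n : ℤ × ℤ) : ℤ × ℤ → ℍ :=
  fun k =>
    eI (2 * π * (m.1 : ℝ) * (k.1 : ℝ) / (M : ℝ)) *
      w (k.1 - n.1 * (N : ℤ), k.2 - n.2 * (N : ℤ)) *
      eJ (2 * π * (m.2 : ℝ) * (k.2 : ℝ) / (M : ℝ))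

/-- The index square `{0, …, M-1}²`. -/
abbrev msq (M : ℕ) : Finset (ℕ × ℕ) := Finset.range M ×ˢ Finset.range M

/-- `k ∈ {0, …, N-1}²` inside `ℤ²`. -/
def InNsq (N : ℕ) (k : ℤ × ℤ) : Prop :=
  0 ≤ k.1 ∧ k.1 < (N : ℤ) ∧ 0 ≤ k.2 ∧ k.2 < (N : ℤ)

/-- `∑_{l<L} ∑_{n∈ℤ²} ∑_{m∈{0,…,M-1}²} |⟨E_{m/M}T_{nN}g_l, h⟩|²`. -/
def frameSum (L M N : ℕ) (g : ℕ → ℤ × ℤ → ℍ) (h : ℤ × ℤ → ℍ) : ℝ :=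
  ∑ l ∈ Finset.range L, ∑' n : ℤ × ℤ, ∑ m ∈ msq M,
    ‖qpair (gaborAtom M N (g l) m n) h‖ ^ 2

/-- Bessel system with bound `B`. -/
def IsBessel (L M N : ℕ) (g : ℕ → ℤ × ℤ → ℍ) (B : ℝ) : Prop :=
  ∀ h : ℤ × ℤ → ℍ, MemL2 h → frameSum L M N g h ≤ B * normSq2 h

/-- Frame with bounds `A ≤ B`. -/
def IsFrame (L M N : ℕ) (g : ℕ → ℤ × ℤ → ℍ) (A B : ℝ) : Prop :=
  ∀ h : ℤ × ℤ → ℍ, MemL2 h →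
    A * normSq2 h ≤ frameSum L M N g h ∧ frameSum L M N g h ≤ B * normSq2 h

/-- Parseval frame. -/
def IsParseval (L M N : ℕ) (g : ℕ → ℤ × ℤ → ℍ) : Prop :=
  ∀ h : ℤ × ℤ → ℍ, MemL2 h → frameSum L M N g h = normSq2 h

/-- Orthonormal system. -/
def IsON (L M N : ℕ) (g : ℕ → ℤ × ℤ → ℍ) : Prop :=
  ∀ l l' : ℕ, l < L → l' < L → ∀ m ∈ msq M, ∀ m' ∈ msq M, ∀ n n' : ℤ × ℤ,
    qpair (gaborAtom M N (g l) m n) (gaborAtom M N (g l') m' n') =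
      if l = l' ∧ m = m' ∧ n = n' then 1 else 0

/-- `G(k,p) = ∑_{l<L} ∑_{n∈ℤ²} g_l(k-nN) g_l(k+pM-nN)`. -/
def gaborG (L M N : ℕ) (g : ℕ → ℤ × ℤ → ℍ) (k p : ℤ × ℤ) : ℍ :=
  ∑ l ∈ Finset.range L, ∑' n : ℤ × ℤ,
    g l (k.1 - n.1 * (N : ℤ), k.2 - n.2 * (N : ℤ)) *
      g l (k.1 + p.1 * (M : ℤ) - n.1 * (N : ℤ), k.2 + p.2 * (M : ℤ) - n.2 * (N : ℤ))

/-- Mixed version: `∑_{l<L} ∑_{n∈ℤ²} g_l(k-nN) h_l(k+pM-nN)`. -/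
def gaborGmix (L M N : ℕ) (g h : ℕ → ℤ × ℤ → ℍ) (k p : ℤ × ℤ) : ℍ :=
  ∑ l ∈ Finset.range L, ∑' n : ℤ × ℤ,
    g l (k.1 - n.1 * (N : ℤ), k.2 - n.2 * (N : ℤ)) *
      h l (k.1 + p.1 * (M : ℤ) - n.1 * (N : ℤ), k.2 + p.2 * (M : ℤ) - n.2 * (N : ℤ))

/-- `∑_{l<L} ∑_{n∈ℤ²} |g_l(k-nN)|²`. -/
def winSum (L N : ℕ) (g : ℕ → ℤ × ℤ → ℍ) (k : ℤ × ℤ) : ℝ :=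
  ∑ l ∈ Finset.range L, ∑' n : ℤ × ℤ,
    ‖g l (k.1 - n.1 * (N : ℤ), k.2 - n.2 * (N : ℤ))‖ ^ 2

/-- Support of diameter `< M` in every row and every column. -/
def DiamLt (M : ℕ) (f : ℤ × ℤ → ℍ) : Prop :=
  (∀ k₂ k₁ k₁' : ℤ, f (k₁, k₂) ≠ 0 → f (k₁', k₂) ≠ 0 → |k₁ - k₁'| < (M : ℤ)) ∧
  (∀ k₁ k₂ k₂' : ℤ, f (k₁, k₂) ≠ 0 → f (k₁, k₂') ≠ 0 → |k₂ - k₂'| < (M : ℤ))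

/-- `M`-periodicity. -/
def MPeriodic (M : ℕ) (f : ℤ × ℤ → ℍ) : Prop :=
  ∀ k : ℤ × ℤ, f (k.1 + (M : ℤ), k.2) = f k ∧ f (k.1, k.2 + (M : ℤ)) = f k

/-- Duality of two Gabor systems (on finitely supported sequences). -/
def AreDual (L M N : ℕ) (g h : ℕ → ℤ × ℤ → ℍ) : Prop :=
  ∀ f φ : ℤ × ℤ → ℍ, (Function.support f).Finite → (Function.support φ).Finite →
    (∑ l ∈ Finset.range L, ∑' n : ℤ × ℤ, ∑ m ∈ msq M,
      qpair f (gaborAtom M N (g l) m n) * qpair (gaborAtom M N (h l) m n) φ)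
      = qpair f φ


namespace Stmt11Aux

open Quaternion

lemma normSq_eI (θ : ℝ) : normSq (eI θ) = 1 := by
  rw [Quaternion.normSq_def']; simp [eI, Real.sin_sq_add_cos_sq, Real.cos_sq_add_sin_sq]

lemma normSq_eJ (θ : ℝ) : normSq (eJ θ) = 1 := by
  rw [Quaternion.normSq_def']; simp [eJ, Real.cos_sq_add_sin_sq]

lemma norm_eI (θ : ℝ) : ‖eI θ‖ = 1 := by
  have h := normSq_eq_norm_mul_self (eI θ); rw [normSq_eI] at h
  have := norm_nonneg (eI θ); nlinarith

lemma norm_eJ (θ : ℝ) : ‖eJ θ‖ = 1 := by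
  have h := normSq_eq_norm_mul_self (eJ θ); rw [normSq_eJ] at h
  have := norm_nonneg (eJ θ); nlinarith

lemma norm_atom (M N : ℕ) (w : ℤ × ℤ → ℍ) (m : ℕ × ℕ) (n : ℤ × ℤ) (k : ℤ × ℤ) :
    ‖gaborAtom M N w m n k‖ = ‖w (k.1 - n.1 * (N : ℤ), k.2 - n.2 * (N : ℤ))‖ := by
  simp [gaborAtom, norm_mul, norm_eI, norm_eJ]

/-- translation equiv on ℤ² -/
def shiftE (N : ℕ) (n : ℤ × ℤ) : ℤ × ℤ ≃ ℤ × ℤ :=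
  (Equiv.subRight (n.1 * (N : ℤ))).prodCongr (Equiv.subRight (n.2 * (N : ℤ)))

lemma shiftE_apply (N : ℕ) (n k : ℤ × ℤ) :
    shiftE N n k = (k.1 - n.1 * (N : ℤ), k.2 - n.2 * (N : ℤ)) := rfl

lemma memL2_atom {M N : ℕ} {w : ℤ × ℤ → ℍ} (hw : MemL2 w) (m : ℕ × ℕ) (n : ℤ × ℤ) :
    MemL2 (gaborAtom M N w m n) := by
  have : (fun k : ℤ × ℤ => ‖gaborAtom M N w m n k‖ ^ 2)
      = (fun k : ℤ × ℤ => ‖w k‖ ^ 2) ∘ (shiftE N n) := by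
    funext k; simp [norm_atom, shiftE_apply]
  rw [MemL2, this]
  exact ((shiftE N n).summable_iff (f := fun k : ℤ × ℤ => ‖w k‖ ^ 2)).2 hw

lemma normSq2_atom {M N : ℕ} (w : ℤ × ℤ → ℍ) (m : ℕ × ℕ) (n : ℤ × ℤ) :
    normSq2 (gaborAtom M N w m n) = normSq2 w := by
  have : (fun k : ℤ × ℤ => ‖gaborAtom M N w m n k‖ ^ 2)
      = (fun k : ℤ × ℤ => ‖w k‖ ^ 2) ∘ (shiftE N n) := by
    funext k; simp [norm_atom, shiftE_apply]
  rw [normSq2, this]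
  exact (shiftE N n).tsum_eq (f := fun k : ℤ × ℤ => ‖w k‖ ^ 2)


lemma summable_mul_norm {f h : ℤ × ℤ → ℍ} (hf : MemL2 f) (hh : MemL2 h) :
    Summable fun k : ℤ × ℤ => ‖f k‖ * ‖h k‖ := by
  apply Summable.of_nonneg_of_le (fun k => by positivity)
    (fun k => ?_) ((hf.add hh).mul_left (1/2 : ℝ))
  have := sq_nonneg (‖f k‖ - ‖h k‖); nlinarith

lemma summable_qpair {f h : ℤ × ℤ → ℍ} (hf : MemL2 f) (hh : MemL2 h) :
    Summable fun k : ℤ × ℤ => star (f k) * h k := by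
  apply Summable.of_norm
  have : (fun k : ℤ × ℤ => ‖star (f k) * h k‖) = fun k => ‖f k‖ * ‖h k‖ := by
    funext k; rw [norm_mul, Quaternion.norm_star]
  rw [this]; exact summable_mul_norm hf hh

lemma qpair_add {f h h' : ℤ × ℤ → ℍ} (hf : MemL2 f) (hh : MemL2 h) (hh' : MemL2 h') :
    qpair f (fun k => h k + h' k) = qpair f h + qpair f h' := by
  rw [qpair, qpair, qpair, ← Summable.tsum_add (summable_qpair hf hh) (summable_qpair hf hh')]
  congr 1; funext k; rw [mul_add]

lemma qpair_norm_le {f h : ℤ × ℤ → ℍ} (hf : MemL2 f) (hh : MemL2 h) :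
    ‖qpair f h‖ ≤ Real.sqrt (normSq2 f) * Real.sqrt (normSq2 h) := by
  have h1 : ‖qpair f h‖ ≤ ∑' k : ℤ × ℤ, ‖f k‖ * ‖h k‖ := by
    refine le_trans (norm_tsum_le_tsum_norm ?_) (le_of_eq ?_)
    · have : (fun k : ℤ × ℤ => ‖star (f k) * h k‖) = fun k => ‖f k‖ * ‖h k‖ := by
        funext k; rw [norm_mul, Quaternion.norm_star]
      rw [this]; exact summable_mul_norm hf hh
    · congr 1; funext k; rw [norm_mul, Quaternion.norm_star]
  refine h1.trans (Summable.tsum_le_of_sum_le (summable_mul_norm hf hh) fun s => ?_)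
  have hcs := Finset.sum_mul_sq_le_sq_mul_sq s (fun k => ‖f k‖) (fun k => ‖h k‖)
  have h2 : ∑ k ∈ s, ‖f k‖ ^ 2 ≤ normSq2 f := Summable.sum_le_tsum s (fun k _ => by positivity) hf
  have h3 : ∑ k ∈ s, ‖h k‖ ^ 2 ≤ normSq2 h := Summable.sum_le_tsum s (fun k _ => by positivity) hh
  have h4 : (0:ℝ) ≤ ∑ k ∈ s, ‖f k‖ * ‖h k‖ :=
    Finset.sum_nonneg fun k _ => by positivity
  have h5 : (∑ k ∈ s, ‖f k‖ * ‖h k‖)^2 ≤ normSq2 f * normSq2 h := by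
    refine hcs.trans (mul_le_mul h2 h3 (Finset.sum_nonneg fun k _ => by positivity) ?_)
    exact le_trans (Finset.sum_nonneg fun k _ => by positivity) h2
  calc ∑ k ∈ s, ‖f k‖ * ‖h k‖ = Real.sqrt ((∑ k ∈ s, ‖f k‖ * ‖h k‖)^2) :=
        (Real.sqrt_sq h4).symm
    _ ≤ Real.sqrt (normSq2 f * normSq2 h) := Real.sqrt_le_sqrt h5
    _ = Real.sqrt (normSq2 f) * Real.sqrt (normSq2 h) := Real.sqrt_mul
        (le_trans (by positivity : (0:ℝ) ≤ ‖f (0,0)‖^2) (Summable.le_tsum hf (0,0)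
          (fun k _ => by positivity))) _

lemma qpair_self {f : ℤ × ℤ → ℍ} (hf : MemL2 f) : qpair f f = ((normSq2 f : ℝ) : ℍ) := by
  have h1 : (fun k : ℤ × ℤ => star (f k) * f k)
      = fun k : ℤ × ℤ => ((‖f k‖ ^ 2 : ℝ) : ℍ) := by
    funext k
    rw [Quaternion.star_mul_self, Quaternion.normSq_eq_norm_mul_self, sq]
  rw [qpair, h1, normSq2]
  exact ((hf.hasSum.map (algebraMap ℝ ℍ) (continuous_algebraMap ℝ ℍ)).congr_fun
    (fun k => rfl)).tsum_eq

/-- delta function at j -/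
def delta (j : ℤ × ℤ) : ℤ × ℤ → ℍ := fun k => if k = j then 1 else 0

lemma memL2_delta (j : ℤ × ℤ) : MemL2 (delta j) := by
  apply summable_of_ne_finset_zero (s := {j})
  intro k hk
  simp only [Finset.mem_singleton] at hk
  simp [delta, hk]

lemma normSq2_delta (j : ℤ × ℤ) : normSq2 (delta j) = 1 := by
  rw [normSq2, tsum_eq_single j]
  · simp [delta]
  · intro k hk; simp [delta, hk]

lemma qpair_delta (f : ℤ × ℤ → ℍ) (j : ℤ × ℤ) : qpair f (delta j) = star (f j) := by
  rw [qpair, tsum_eq_single j]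
  · simp [delta]
  · intro k hk; simp [delta, hk]

/-- injectivity of n ↦ j - nN -/
lemma shift_inj {N : ℕ} (hN : 0 < N) (j : ℤ × ℤ) :
    Function.Injective (fun n : ℤ × ℤ => ((j.1 - n.1 * (N : ℤ), j.2 - n.2 * (N : ℤ)) : ℤ × ℤ)) := by
  intro n n' h
  have hN' : (N : ℤ) ≠ 0 := by exact_mod_cast hN.ne'
  simp only [Prod.mk.injEq] at h
  obtain ⟨h1, h2⟩ := h
  have e1 : n.1 * (N : ℤ) = n'.1 * (N : ℤ) := by linarith
  have e2 : n.2 * (N : ℤ) = n'.2 * (N : ℤ) := by linarith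
  exact Prod.ext (mul_right_cancel₀ hN' e1) (mul_right_cancel₀ hN' e2)

lemma summable_shifted {N : ℕ} (hN : 0 < N) {w : ℤ × ℤ → ℍ} (hw : MemL2 w) (j : ℤ × ℤ) :
    Summable fun n : ℤ × ℤ => ‖w (j.1 - n.1 * (N : ℤ), j.2 - n.2 * (N : ℤ))‖ ^ 2 :=
  hw.comp_injective (shift_inj hN j)

/-- Step A : frameSum at a delta -/
lemma frameSum_delta {L M N : ℕ} (hN : 0 < N) {g : ℕ → ℤ × ℤ → ℍ}
    (hg : ∀ l < L, MemL2 (g l)) (j : ℤ × ℤ) :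
    frameSum L M N g (delta j) = (M:ℝ)^2 * ∑ l ∈ Finset.range L,
      ∑' n : ℤ × ℤ, ‖g l (j.1 - n.1 * (N : ℤ), j.2 - n.2 * (N : ℤ))‖ ^ 2 := by
  rw [frameSum, Finset.mul_sum]
  apply Finset.sum_congr rfl
  intro l hl
  have key : ∀ n : ℤ × ℤ, ∑ m ∈ msq M, ‖qpair (gaborAtom M N (g l) m n) (delta j)‖ ^ 2
      = (M:ℝ)^2 * ‖g l (j.1 - n.1 * (N : ℤ), j.2 - n.2 * (N : ℤ))‖ ^ 2 := by
    intro n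
    have : ∀ m ∈ msq M, ‖qpair (gaborAtom M N (g l) m n) (delta j)‖ ^ 2
        = ‖g l (j.1 - n.1 * (N : ℤ), j.2 - n.2 * (N : ℤ))‖ ^ 2 := by
      intro m _
      rw [qpair_delta, Quaternion.norm_star, norm_atom]
    rw [Finset.sum_congr rfl this, Finset.sum_const]
    simp [Finset.card_product, mul_comm, sq]
  rw [tsum_congr key, tsum_mul_left]

/-- `Fin N × ℤ ≃ ℤ`, `(j, n) ↦ j - n * N`. -/
def fdEquiv (N : ℕ) (hN : 0 < N) : Fin N × ℤ ≃ ℤ where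
  toFun p := (p.1 : ℤ) - p.2 * (N : ℤ)
  invFun k := (⟨(k % (N : ℤ)).toNat, by
      have h1 : 0 ≤ k % (N : ℤ) := Int.emod_nonneg k (by exact_mod_cast hN.ne')
      have h2 : k % (N : ℤ) < (N : ℤ) := Int.emod_lt_of_pos k (by exact_mod_cast hN)
      omega⟩, -(k / (N : ℤ)))
  left_inv := by
    rintro ⟨j, n⟩
    have hNz : (N : ℤ) ≠ 0 := by exact_mod_cast hN.ne'
    have hj0 : (0 : ℤ) ≤ (j : ℤ) := by exact_mod_cast Nat.zero_le _
    have hjN : (j : ℤ) < (N : ℤ) := by exact_mod_cast j.2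
    have hrw : (j : ℤ) - n * (N : ℤ) = (j : ℤ) + (N : ℤ) * (-n) := by ring
    have hmod : ((j : ℤ) - n * (N : ℤ)) % (N : ℤ) = (j : ℤ) := by
      rw [hrw, Int.add_mul_emod_self_left, Int.emod_eq_of_lt hj0 hjN]
    have hdiv : ((j : ℤ) - n * (N : ℤ)) / (N : ℤ) = -n := by
      rw [hrw, Int.add_mul_ediv_left _ _ hNz, Int.ediv_eq_zero_of_lt hj0 hjN, zero_add]
    ext
    · simp [hmod]
    · simp [hdiv]
  right_inv := by
    intro k
    have hNz : (N : ℤ) ≠ 0 := by exact_mod_cast hN.ne'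
    have h1 : 0 ≤ k % (N : ℤ) := Int.emod_nonneg k hNz
    simp only []
    rw [Int.toNat_of_nonneg h1]
    have := Int.mul_ediv_add_emod k (N : ℤ)
    linarith

/-- 2-D fundamental domain equiv. -/
def fdEquiv2 (N : ℕ) (hN : 0 < N) : ((Fin N × Fin N) × (ℤ × ℤ)) ≃ ℤ × ℤ :=
  (Equiv.prodProdProdComm (Fin N) (Fin N) ℤ ℤ).trans
    ((fdEquiv N hN).prodCongr (fdEquiv N hN))

lemma fdEquiv2_apply (N : ℕ) (hN : 0 < N) (j : Fin N × Fin N) (n : ℤ × ℤ) :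
    fdEquiv2 N hN (j, n) = ((j.1 : ℤ) - n.1 * (N : ℤ), (j.2 : ℤ) - n.2 * (N : ℤ)) := rfl

/-- Step B : resummation over the fundamental domain. -/
lemma sum_fd {N : ℕ} (hN : 0 < N) {w : ℤ × ℤ → ℍ} (hw : MemL2 w) :
    ∑ j : Fin N × Fin N, ∑' n : ℤ × ℤ,
        ‖w ((j.1 : ℤ) - n.1 * (N : ℤ), (j.2 : ℤ) - n.2 * (N : ℤ))‖ ^ 2 = normSq2 w := by
  have hsum : Summable ((fun k : ℤ × ℤ => ‖w k‖ ^ 2) ∘ (fdEquiv2 N hN)) :=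
    (Equiv.summable_iff _).2 hw
  calc ∑ j : Fin N × Fin N, ∑' n : ℤ × ℤ,
        ‖w ((j.1 : ℤ) - n.1 * (N : ℤ), (j.2 : ℤ) - n.2 * (N : ℤ))‖ ^ 2
      = ∑' j : Fin N × Fin N, ∑' n : ℤ × ℤ,
        ((fun k : ℤ × ℤ => ‖w k‖ ^ 2) ∘ (fdEquiv2 N hN)) (j, n) := by
        rw [tsum_fintype]
        exact Finset.sum_congr rfl fun j _ => tsum_congr fun n => by
          rw [Function.comp_apply, fdEquiv2_apply]
    _ = ∑' p : (Fin N × Fin N) × (ℤ × ℤ),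
        ((fun k : ℤ × ℤ => ‖w k‖ ^ 2) ∘ (fdEquiv2 N hN)) p := (Summable.tsum_prod' hsum
          (fun j => hsum.comp_injective (fun n n' e => by simpa using e))).symm
    _ = normSq2 w := (fdEquiv2 N hN).tsum_eq (fun k : ℤ × ℤ => ‖w k‖ ^ 2)

lemma parseval_win {L M N : ℕ} (hN : 0 < N) {g : ℕ → ℤ × ℤ → ℍ}
    (hg : ∀ l < L, MemL2 (g l)) (hpar : IsParseval L M N g) (j : ℤ × ℤ) :
    (M:ℝ)^2 * ∑ l ∈ Finset.range L,
      ∑' n : ℤ × ℤ, ‖g l (j.1 - n.1 * (N : ℤ), j.2 - n.2 * (N : ℤ))‖ ^ 2 = 1 := by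
  have h := hpar (delta j) (memL2_delta j)
  rw [frameSum_delta hN hg, normSq2_delta] at h
  exact h

lemma key_identity {L M N : ℕ} (hN : 0 < N) {g : ℕ → ℤ × ℤ → ℍ}
    (hg : ∀ l < L, MemL2 (g l)) (hpar : IsParseval L M N g) :
    (M:ℝ)^2 * ∑ l ∈ Finset.range L, normSq2 (g l) = (N:ℝ)^2 := by
  have hcard : ((N:ℝ))^2 = ∑ _j : Fin N × Fin N, (1:ℝ) := by
    rw [Finset.sum_const]
    simp [Fintype.card_prod, sq]
  rw [hcard]
  calc (M:ℝ)^2 * ∑ l ∈ Finset.range L, normSq2 (g l)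
      = (M:ℝ)^2 * ∑ l ∈ Finset.range L, ∑ j : Fin N × Fin N, ∑' n : ℤ × ℤ,
          ‖g l ((j.1 : ℤ) - n.1 * (N : ℤ), (j.2 : ℤ) - n.2 * (N : ℤ))‖ ^ 2 := by
        congr 1
        exact Finset.sum_congr rfl fun l hl =>
          (sum_fd hN (hg l (Finset.mem_range.1 hl))).symm
    _ = ∑ j : Fin N × Fin N, (M:ℝ)^2 * ∑ l ∈ Finset.range L, ∑' n : ℤ × ℤ,
          ‖g l ((j.1 : ℤ) - n.1 * (N : ℤ), (j.2 : ℤ) - n.2 * (N : ℤ))‖ ^ 2 := by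
        rw [Finset.sum_comm, Finset.mul_sum]
    _ = ∑ _j : Fin N × Fin N, (1:ℝ) := by
        exact Finset.sum_congr rfl fun j _ =>
          parseval_win hN hg hpar ((j.1 : ℤ), (j.2 : ℤ))

lemma eI_zero : eI 0 = 1 := by
  ext <;> simp [eI]

lemma eJ_zero : eJ 0 = 1 := by
  ext <;> simp [eJ]

lemma atom_zero (M N : ℕ) (w : ℤ × ℤ → ℍ) : gaborAtom M N w (0, 0) (0, 0) = w := by
  funext k
  have h1 : (2 * π * (((0:ℕ) : ℝ)) * (k.1 : ℝ) / (M : ℝ)) = 0 := by simp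
  have h2 : (2 * π * (((0:ℕ) : ℝ)) * (k.2 : ℝ) / (M : ℝ)) = 0 := by simp
  simp only [gaborAtom, h1, h2, eI_zero, eJ_zero, one_mul, mul_one]
  norm_num

lemma zero_mem_msq {M : ℕ} (hM : 0 < M) : ((0,0) : ℕ × ℕ) ∈ msq M := by
  simp [Finset.mem_product, hM]

lemma on_forward {L M N : ℕ} (hL : 0 < L) (hM : 0 < M) (hN : 0 < N)
    {g : ℕ → ℤ × ℤ → ℍ} (hg : ∀ l < L, MemL2 (g l)) (hpar : IsParseval L M N g)
    (hON : IsON L M N g) : N ^ 2 = L * M ^ 2 := by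
  have hdiag : ∀ l < L, normSq2 (g l) = 1 := by
    intro l hl
    have h := hON l l hl hl (0,0) (zero_mem_msq hM) (0,0) (zero_mem_msq hM) (0,0) (0,0)
    simp only [and_self, if_true, atom_zero] at h
    have h2 := qpair_self (hg l hl)
    rw [h] at h2
    have : ((1:ℝ) : ℍ) = ((normSq2 (g l) : ℝ) : ℍ) := by rw [← h2]; norm_num
    exact (Quaternion.coe_injective this).symm
  have hkey := key_identity hN hg hpar
  rw [Finset.sum_congr rfl (fun l hl => hdiag l (Finset.mem_range.1 hl)),
    Finset.sum_const, Finset.card_range] at hkey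
  have : ((N ^ 2 : ℕ) : ℝ) = ((L * M ^ 2 : ℕ) : ℝ) := by
    rw [nsmul_eq_mul, mul_one] at hkey
    push_cast
    push_cast at hkey
    linarith
  exact_mod_cast this

lemma summable_finset_sum {ι κ : Type*} (s : Finset ι) (f : ι → κ → ℝ)
    (h : ∀ i ∈ s, Summable (f i)) : Summable (fun n => ∑ i ∈ s, f i n) := by
  classical
  induction s using Finset.induction_on with
  | empty => simpa using summable_zero
  | @insert a s' ha ih =>
      simp only [Finset.sum_insert ha]
      exact (h a (Finset.mem_insert_self a s')).add
        (ih fun i hi => h i (Finset.mem_insert_of_mem hi))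

lemma qpair_fin (f φ : ℤ × ℤ → ℍ) (F : Finset (ℤ × ℤ)) (hφ : ∀ k ∉ F, φ k = 0) :
    qpair f φ = ∑ k ∈ F, star (f k) * φ k :=
  tsum_eq_sum (fun k hk => by rw [hφ k hk, mul_zero])

lemma norm_qpair_fin_le {M N : ℕ} (w φ : ℤ × ℤ → ℍ) (F : Finset (ℤ × ℤ))
    (hφ : ∀ k ∉ F, φ k = 0) (m : ℕ × ℕ) (n : ℤ × ℤ) :
    ‖qpair (gaborAtom M N w m n) φ‖ ≤
      ∑ k ∈ F, ‖w (k.1 - n.1 * (N : ℤ), k.2 - n.2 * (N : ℤ))‖ * ‖φ k‖ := by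
  rw [qpair_fin _ _ F hφ]
  refine (norm_sum_le _ _).trans (le_of_eq (Finset.sum_congr rfl fun k _ => ?_))
  rw [norm_mul, Quaternion.norm_star, norm_atom]

/-- summability over `n` of the m-summed squared pairings, for finitely supported `φ`. -/
lemma summable_fin_supp {M N : ℕ} (hN : 0 < N) {w : ℤ × ℤ → ℍ} (hw : MemL2 w)
    (φ : ℤ × ℤ → ℍ) (F : Finset (ℤ × ℤ)) (hφ : ∀ k ∉ F, φ k = 0) :
    Summable fun n : ℤ × ℤ =>
      ∑ m ∈ msq M, ‖qpair (gaborAtom M N w m n) φ‖ ^ 2 := by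
  classical
  set S : (ℤ × ℤ) → ℝ := fun n => ∑ k ∈ F,
    ‖w (k.1 - n.1 * (N : ℤ), k.2 - n.2 * (N : ℤ))‖ * ‖φ k‖ with hS
  have hS0 : ∀ n, 0 ≤ S n := fun n => Finset.sum_nonneg fun k _ => by positivity
  have hbound : ∀ n : ℤ × ℤ, ∑ m ∈ msq M, ‖qpair (gaborAtom M N w m n) φ‖ ^ 2
      ≤ (M:ℝ)^2 * ((F.card : ℝ) * ∑ k ∈ F,
        ‖w (k.1 - n.1 * (N : ℤ), k.2 - n.2 * (N : ℤ))‖^2 * ‖φ k‖^2) := by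
    intro n
    have h1 : ∀ m ∈ msq M, ‖qpair (gaborAtom M N w m n) φ‖ ^ 2 ≤ S n ^ 2 := by
      intro m _
      have := norm_qpair_fin_le (M := M) (N := N) w φ F hφ m n
      exact pow_le_pow_left₀ (norm_nonneg _) this 2
    have h2 : ∑ m ∈ msq M, ‖qpair (gaborAtom M N w m n) φ‖ ^ 2 ≤ (M:ℝ)^2 * S n ^ 2 := by
      refine (Finset.sum_le_sum h1).trans (le_of_eq ?_)
      rw [Finset.sum_const]
      simp [Finset.card_product, sq]
    refine h2.trans (mul_le_mul_of_nonneg_left ?_ (by positivity))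
    have := sq_sum_le_card_mul_sum_sq
      (s := F) (f := fun k => ‖w (k.1 - n.1 * (N : ℤ), k.2 - n.2 * (N : ℤ))‖ * ‖φ k‖)
    refine this.trans (le_of_eq ?_)
    congr 1
    exact Finset.sum_congr rfl fun k _ => by ring
  refine Summable.of_nonneg_of_le
    (fun n => Finset.sum_nonneg fun m _ => by positivity) hbound ?_
  apply Summable.mul_left
  apply Summable.mul_left
  apply summable_finset_sum
  intro k _
  exact ((summable_shifted hN hw k).mul_right (‖φ k‖^2)).congr (fun n => rfl)

/-- partial (over `n ∈ S`, one `l`) sums are below the frame sum, for fin supported φ. -/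
lemma fin_partial_le {L M N : ℕ} (hN : 0 < N) {g : ℕ → ℤ × ℤ → ℍ}
    (hg : ∀ l < L, MemL2 (g l)) (φ : ℤ × ℤ → ℍ) (F : Finset (ℤ × ℤ))
    (hφ : ∀ k ∉ F, φ k = 0) {l : ℕ} (hl : l < L) (S : Finset (ℤ × ℤ)) :
    ∑ n ∈ S, ∑ m ∈ msq M, ‖qpair (gaborAtom M N (g l) m n) φ‖ ^ 2
      ≤ frameSum L M N g φ := by
  have h1 : ∑ n ∈ S, ∑ m ∈ msq M, ‖qpair (gaborAtom M N (g l) m n) φ‖ ^ 2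
      ≤ ∑' n : ℤ × ℤ, ∑ m ∈ msq M, ‖qpair (gaborAtom M N (g l) m n) φ‖ ^ 2 :=
    Summable.sum_le_tsum S (fun n _ => Finset.sum_nonneg fun m _ => by positivity)
      (summable_fin_supp hN (hg l hl) φ F hφ)
  refine h1.trans ?_
  exact Finset.single_le_sum (f := fun l' => ∑' n : ℤ × ℤ, ∑ m ∈ msq M,
      ‖qpair (gaborAtom M N (g l') m n) φ‖ ^ 2)
    (fun l' _ => tsum_nonneg fun n => Finset.sum_nonneg fun m _ => by positivity)
    (Finset.mem_range.2 hl)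

lemma normSq2_nonneg (f : ℤ × ℤ → ℍ) : 0 ≤ normSq2 f :=
  tsum_nonneg fun k => by positivity

lemma qpair_sq_le {f h : ℤ × ℤ → ℍ} (hf : MemL2 f) (hh : MemL2 h) :
    ‖qpair f h‖ ^ 2 ≤ normSq2 f * normSq2 h := by
  have h1 := qpair_norm_le hf hh
  have h2 : (Real.sqrt (normSq2 f) * Real.sqrt (normSq2 h)) ^ 2
      = normSq2 f * normSq2 h := by
    rw [mul_pow, Real.sq_sqrt (normSq2_nonneg f), Real.sq_sqrt (normSq2_nonneg h)]
  calc ‖qpair f h‖ ^ 2 ≤ (Real.sqrt (normSq2 f) * Real.sqrt (normSq2 h)) ^ 2 :=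
        pow_le_pow_left₀ (norm_nonneg _) h1 2
    _ = _ := h2

lemma summable_key {L M N : ℕ} (hN : 0 < N) {g : ℕ → ℤ × ℤ → ℍ}
    (hg : ∀ l < L, MemL2 (g l)) (hpar : IsParseval L M N g)
    {h : ℤ × ℤ → ℍ} (hh : MemL2 h) {l : ℕ} (hl : l < L) :
    Summable fun n : ℤ × ℤ =>
      ∑ m ∈ msq M, ‖qpair (gaborAtom M N (g l) m n) h‖ ^ 2 := by
  classical
  have hw : MemL2 (g l) := hg l hl
  set nm : ℝ := normSq2 (g l) with hnm
  have hnm0 : 0 ≤ nm := normSq2_nonneg _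
  refine summable_of_sum_le (fun n => Finset.sum_nonneg fun m _ => by positivity)
    (fun S => ?_) (c := 2 * normSq2 h + 2)
  -- choose ε depending on S
  set ε : ℝ := 1 / ((S.card : ℝ) * (M:ℝ)^2 * (nm + 1) + 1) with hε
  have hεpos : 0 < ε := by positivity
  obtain ⟨F, hF⟩ : ∃ F : Finset (ℤ × ℤ),
      ∑' k : {x : ℤ × ℤ // x ∉ F}, ‖h (k : ℤ × ℤ)‖ ^ 2 < ε :=
    ((tendsto_order.1 (tendsto_tsum_compl_atTop_zero
      (fun k : ℤ × ℤ => ‖h k‖ ^ 2))).2 ε hεpos).exists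
  set φ : ℤ × ℤ → ℍ := fun k => if k ∈ F then h k else 0 with hφ
  set r : ℤ × ℤ → ℍ := fun k => if k ∈ F then 0 else h k with hr
  have hφsupp : ∀ k ∉ F, φ k = 0 := fun k hk => by simp [hφ, hk]
  have hφL2 : MemL2 φ := by
    apply summable_of_ne_finset_zero (s := F)
    intro k hk
    simp [hφ, hk]
  have hrL2 : MemL2 r := by
    apply Summable.of_nonneg_of_le (fun k => by positivity) (fun k => ?_) hh
    by_cases hk : k ∈ F <;> simp [hr, hk] <;> positivity
  have hφle : normSq2 φ ≤ normSq2 h := by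
    apply Summable.tsum_le_tsum (fun k => ?_) hφL2 hh
    by_cases hk : k ∈ F <;> simp [hφ, hk] <;> positivity
  have hrval : normSq2 r < ε := by
    have h1 : normSq2 r = ∑' k : {x : ℤ × ℤ // x ∉ F}, ‖h (k : ℤ × ℤ)‖ ^ 2 := by
      calc normSq2 r = ∑' k : ℤ × ℤ, ({x : ℤ × ℤ | x ∉ F}.indicator
              (fun k => ‖h k‖ ^ 2)) k := by
            refine tsum_congr fun k => ?_
            by_cases hk : k ∈ F <;> simp [Set.indicator, hr, hk]
        _ = ∑' k : {x : ℤ × ℤ // x ∉ F}, ‖h (k : ℤ × ℤ)‖ ^ 2 :=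
            (tsum_subtype ({x : ℤ × ℤ | x ∉ F}) (fun k => ‖h k‖ ^ 2)).symm
    rw [h1]; exact hF
  have hsplit : h = fun k => φ k + r k := by
    funext k
    by_cases hk : k ∈ F <;> simp [hφ, hr, hk]
  -- pointwise estimate
  have hpt : ∀ n : ℤ × ℤ, ∀ m ∈ msq M,
      ‖qpair (gaborAtom M N (g l) m n) h‖ ^ 2
        ≤ 2 * ‖qpair (gaborAtom M N (g l) m n) φ‖ ^ 2 + 2 * (nm * ε) := by
    intro n m _
    have hatom : MemL2 (gaborAtom M N (g l) m n) := memL2_atom hw m n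
    have hq : qpair (gaborAtom M N (g l) m n) h
        = qpair (gaborAtom M N (g l) m n) φ + qpair (gaborAtom M N (g l) m n) r := by
      conv_lhs => rw [hsplit]
      exact qpair_add hatom hφL2 hrL2
    have hr2 : ‖qpair (gaborAtom M N (g l) m n) r‖ ^ 2 ≤ nm * ε := by
      refine (qpair_sq_le hatom hrL2).trans ?_
      rw [normSq2_atom]
      exact mul_le_mul_of_nonneg_left hrval.le hnm0
    have htri : ‖qpair (gaborAtom M N (g l) m n) h‖
        ≤ ‖qpair (gaborAtom M N (g l) m n) φ‖ + ‖qpair (gaborAtom M N (g l) m n) r‖ := by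
      rw [hq]; exact norm_add_le _ _
    have h2 : ‖qpair (gaborAtom M N (g l) m n) h‖ ^ 2
        ≤ (‖qpair (gaborAtom M N (g l) m n) φ‖ + ‖qpair (gaborAtom M N (g l) m n) r‖) ^ 2 :=
      pow_le_pow_left₀ (norm_nonneg _) htri 2
    nlinarith [norm_nonneg (qpair (gaborAtom M N (g l) m n) φ),
      norm_nonneg (qpair (gaborAtom M N (g l) m n) r), hr2,
      sq_nonneg (‖qpair (gaborAtom M N (g l) m n) φ‖ - ‖qpair (gaborAtom M N (g l) m n) r‖)]
  -- sum the estimate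
  have hsum1 : ∑ n ∈ S, ∑ m ∈ msq M, ‖qpair (gaborAtom M N (g l) m n) h‖ ^ 2
      ≤ 2 * (∑ n ∈ S, ∑ m ∈ msq M, ‖qpair (gaborAtom M N (g l) m n) φ‖ ^ 2)
        + (S.card : ℝ) * (M:ℝ)^2 * (2 * (nm * ε)) := by
    calc ∑ n ∈ S, ∑ m ∈ msq M, ‖qpair (gaborAtom M N (g l) m n) h‖ ^ 2
        ≤ ∑ n ∈ S, ∑ m ∈ msq M,
          (2 * ‖qpair (gaborAtom M N (g l) m n) φ‖ ^ 2 + 2 * (nm * ε)) :=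
          Finset.sum_le_sum fun n _ => Finset.sum_le_sum fun m hm => hpt n m hm
      _ = 2 * (∑ n ∈ S, ∑ m ∈ msq M, ‖qpair (gaborAtom M N (g l) m n) φ‖ ^ 2)
          + (S.card : ℝ) * ((msq M).card : ℝ) * (2 * (nm * ε)) := by
          simp [Finset.sum_add_distrib, Finset.mul_sum, Finset.sum_const]
          ring
      _ = _ := by
          simp [Finset.card_product, sq]
  have hfin : ∑ n ∈ S, ∑ m ∈ msq M, ‖qpair (gaborAtom M N (g l) m n) φ‖ ^ 2
      ≤ normSq2 h := by
    refine (fin_partial_le hN hg φ F hφsupp hl S).trans ?_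
    rw [hpar φ hφL2]
    exact hφle
  have hεbound : (S.card : ℝ) * (M:ℝ)^2 * (2 * (nm * ε)) ≤ 2 := by
    have hd : (0:ℝ) < (S.card : ℝ) * (M:ℝ)^2 * (nm + 1) + 1 :=
      add_pos_of_nonneg_of_pos (mul_nonneg (mul_nonneg (Nat.cast_nonneg _) (sq_nonneg _)) (by linarith)) one_pos
    have : (S.card : ℝ) * (M:ℝ)^2 * (2 * (nm * ε))
        = 2 * (((S.card : ℝ) * (M:ℝ)^2 * nm) * ε) := by ring
    rw [this]
    have hle : ((S.card : ℝ) * (M:ℝ)^2 * nm) * ε ≤ 1 := by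
      rw [hε]
      rw [mul_one_div, div_le_one hd]
      have h0 : (0:ℝ) ≤ (S.card : ℝ) * (M:ℝ)^2 := mul_nonneg (Nat.cast_nonneg _) (sq_nonneg _)
      nlinarith
    linarith
  linarith

lemma partial_le_frameSum {L M N : ℕ} (hN : 0 < N) {g : ℕ → ℤ × ℤ → ℍ}
    (hg : ∀ l < L, MemL2 (g l)) (hpar : IsParseval L M N g)
    {h : ℤ × ℤ → ℍ} (hh : MemL2 h) {l : ℕ} (hl : l < L) (S : Finset (ℤ × ℤ)) :
    ∑ n ∈ S, ∑ m ∈ msq M, ‖qpair (gaborAtom M N (g l) m n) h‖ ^ 2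
      ≤ frameSum L M N g h := by
  have h1 : ∑ n ∈ S, ∑ m ∈ msq M, ‖qpair (gaborAtom M N (g l) m n) h‖ ^ 2
      ≤ ∑' n : ℤ × ℤ, ∑ m ∈ msq M, ‖qpair (gaborAtom M N (g l) m n) h‖ ^ 2 :=
    Summable.sum_le_tsum S (fun n _ => Finset.sum_nonneg fun m _ => by positivity)
      (summable_key hN hg hpar hh hl)
  refine h1.trans ?_
  exact Finset.single_le_sum (f := fun l' => ∑' n : ℤ × ℤ, ∑ m ∈ msq M,
      ‖qpair (gaborAtom M N (g l') m n) h‖ ^ 2)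
    (fun l' _ => tsum_nonneg fun n => Finset.sum_nonneg fun m _ => by positivity)
    (Finset.mem_range.2 hl)

lemma pair_le_frameSum {L M N : ℕ} (hN : 0 < N) {g : ℕ → ℤ × ℤ → ℍ}
    (hg : ∀ l < L, MemL2 (g l)) (hpar : IsParseval L M N g)
    {h : ℤ × ℤ → ℍ} (hh : MemL2 h)
    {l1 l2 : ℕ} (hl1 : l1 < L) (hl2 : l2 < L)
    {m1 m2 : ℕ × ℕ} (hm1 : m1 ∈ msq M) (hm2 : m2 ∈ msq M) (n1 n2 : ℤ × ℤ)
    (hne : ¬ (l1 = l2 ∧ m1 = m2 ∧ n1 = n2)) :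
    ‖qpair (gaborAtom M N (g l1) m1 n1) h‖ ^ 2
      + ‖qpair (gaborAtom M N (g l2) m2 n2) h‖ ^ 2 ≤ frameSum L M N g h := by
  classical
  set T : ℕ → ℝ := fun l => ∑' n : ℤ × ℤ, ∑ m ∈ msq M,
    ‖qpair (gaborAtom M N (g l) m n) h‖ ^ 2 with hT
  have hT0 : ∀ l, 0 ≤ T l :=
    fun l => tsum_nonneg fun n => Finset.sum_nonneg fun m _ => by positivity
  have hterm : ∀ {l : ℕ}, l < L → ∀ {m : ℕ × ℕ}, m ∈ msq M → ∀ n : ℤ × ℤ,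
      ‖qpair (gaborAtom M N (g l) m n) h‖ ^ 2 ≤ T l := by
    intro l hl m hm n
    have h1 : ‖qpair (gaborAtom M N (g l) m n) h‖ ^ 2
        ≤ ∑ m' ∈ msq M, ‖qpair (gaborAtom M N (g l) m' n) h‖ ^ 2 :=
      Finset.single_le_sum (f := fun m' => ‖qpair (gaborAtom M N (g l) m' n) h‖ ^ 2)
        (fun m' _ => by positivity) hm
    refine h1.trans ?_
    exact Summable.le_tsum (summable_key hN hg hpar hh hl) n
      (fun n' _ => Finset.sum_nonneg fun m' _ => by positivity)
  by_cases hll : l1 = l2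
  · subst hll
    by_cases hnn : n1 = n2
    · subst hnn
      -- m1 ≠ m2
      have hmm : m1 ≠ m2 := by tauto
      have h1 : ‖qpair (gaborAtom M N (g l1) m1 n1) h‖ ^ 2
          + ‖qpair (gaborAtom M N (g l1) m2 n1) h‖ ^ 2
          ≤ ∑ m ∈ msq M, ‖qpair (gaborAtom M N (g l1) m n1) h‖ ^ 2 := by
        rw [← Finset.sum_pair (f := fun m => ‖qpair (gaborAtom M N (g l1) m n1) h‖ ^ 2) hmm]
        exact Finset.sum_le_sum_of_subset_of_nonneg
          (by intro x hx; rcases Finset.mem_insert.1 hx with rfl | hx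
              · exact hm1
              · rw [Finset.mem_singleton.1 hx]; exact hm2)
          (fun m _ _ => by positivity)
      refine h1.trans ?_
      have := partial_le_frameSum hN hg hpar hh hl1 ({n1} : Finset (ℤ × ℤ))
      simpa using this
    · -- n1 ≠ n2
      have h1 : ‖qpair (gaborAtom M N (g l1) m1 n1) h‖ ^ 2
            ≤ ∑ m ∈ msq M, ‖qpair (gaborAtom M N (g l1) m n1) h‖ ^ 2 :=
        Finset.single_le_sum (f := fun m' => ‖qpair (gaborAtom M N (g l1) m' n1) h‖ ^ 2)
          (fun m' _ => by positivity) hm1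
      have h2 : ‖qpair (gaborAtom M N (g l1) m2 n2) h‖ ^ 2
            ≤ ∑ m ∈ msq M, ‖qpair (gaborAtom M N (g l1) m n2) h‖ ^ 2 :=
        Finset.single_le_sum (f := fun m' => ‖qpair (gaborAtom M N (g l1) m' n2) h‖ ^ 2)
          (fun m' _ => by positivity) hm2
      have h3 := partial_le_frameSum hN hg hpar hh hl1 ({n1, n2} : Finset (ℤ × ℤ))
      rw [Finset.sum_pair hnn] at h3
      linarith
  · -- l1 ≠ l2
    have h1 := hterm hl1 hm1 n1
    have h2 := hterm hl2 hm2 n2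
    have h3 : T l1 + T l2 ≤ frameSum L M N g h := by
      rw [frameSum]
      have : T l1 + T l2 = ∑ l ∈ ({l1, l2} : Finset ℕ), T l := by
        rw [Finset.sum_pair hll]
      rw [this]
      exact Finset.sum_le_sum_of_subset_of_nonneg
        (by intro x hx; rcases Finset.mem_insert.1 hx with rfl | hx
            · exact Finset.mem_range.2 hl1
            · rw [Finset.mem_singleton.1 hx]; exact Finset.mem_range.2 hl2)
        (fun l _ _ => hT0 l)
    linarith

lemma single_le_frameSum {L M N : ℕ} (hN : 0 < N) {g : ℕ → ℤ × ℤ → ℍ}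
    (hg : ∀ l < L, MemL2 (g l)) (hpar : IsParseval L M N g)
    {h : ℤ × ℤ → ℍ} (hh : MemL2 h) {l : ℕ} (hl : l < L)
    {m : ℕ × ℕ} (hm : m ∈ msq M) (n : ℤ × ℤ) :
    ‖qpair (gaborAtom M N (g l) m n) h‖ ^ 2 ≤ frameSum L M N g h := by
  have h1 : ‖qpair (gaborAtom M N (g l) m n) h‖ ^ 2
      ≤ ∑ m' ∈ msq M, ‖qpair (gaborAtom M N (g l) m' n) h‖ ^ 2 :=
    Finset.single_le_sum (f := fun m' => ‖qpair (gaborAtom M N (g l) m' n) h‖ ^ 2)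
      (fun m' _ => by positivity) hm
  refine h1.trans ?_
  have := partial_le_frameSum hN hg hpar hh hl ({n} : Finset (ℤ × ℤ))
  simpa using this

lemma on_backward {L M N : ℕ} (hL : 0 < L) (hM : 0 < M) (hN : 0 < N)
    {g : ℕ → ℤ × ℤ → ℍ} (hg : ∀ l < L, MemL2 (g l)) (hpar : IsParseval L M N g)
    (hNLM : N ^ 2 = L * M ^ 2) : IsON L M N g := by
  have hM2 : ((M:ℝ))^2 ≠ 0 := by positivity
  have hsuml : ∑ l ∈ Finset.range L, normSq2 (g l) = (L : ℝ) := by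
    have hkey := key_identity hN hg hpar
    have hcast : ((N:ℝ))^2 = (L:ℝ) * (M:ℝ)^2 := by exact_mod_cast hNLM
    rw [hcast] at hkey
    have h2 : (M:ℝ)^2 * ∑ l ∈ Finset.range L, normSq2 (g l) = (M:ℝ)^2 * (L:ℝ) := by
      rw [hkey]; ring
    exact mul_left_cancel₀ hM2 h2
  have hle1 : ∀ l < L, normSq2 (g l) ≤ 1 := by
    intro l hl
    have hgl : MemL2 (g l) := hg l hl
    have hfs : frameSum L M N g (g l) = normSq2 (g l) := hpar (g l) hgl
    have hsingle := single_le_frameSum hN hg hpar hgl hl (zero_mem_msq hM) ((0,0) : ℤ × ℤ)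
    rw [atom_zero, hfs] at hsingle
    have hq : ‖qpair (g l) (g l)‖ ^ 2 = (normSq2 (g l)) ^ 2 := by
      rw [qpair_self hgl, Quaternion.norm_coe, Real.norm_eq_abs,
        abs_of_nonneg (normSq2_nonneg _)]
    rw [hq] at hsingle
    nlinarith [normSq2_nonneg (g l)]
  have heq1 : ∀ l < L, normSq2 (g l) = 1 := by
    intro l hl
    have hzero : ∑ l' ∈ Finset.range L, (1 - normSq2 (g l')) = 0 := by
      rw [Finset.sum_sub_distrib, hsuml, Finset.sum_const, Finset.card_range,
        nsmul_eq_mul, mul_one, sub_self]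
    have := (Finset.sum_eq_zero_iff_of_nonneg
      (fun l' hl' => by
        have := hle1 l' (Finset.mem_range.1 hl'); linarith)).1 hzero
      l (Finset.mem_range.2 hl)
    linarith
  intro l l' hl hl' m hm m' hm' n n'
  set h : ℤ × ℤ → ℍ := gaborAtom M N (g l') m' n' with hh_def
  have hh : MemL2 h := memL2_atom (hg l' hl') m' n'
  have hn1 : normSq2 h = 1 := by
    rw [hh_def, normSq2_atom]
    exact heq1 l' hl'
  have hfs : frameSum L M N g h = 1 := by rw [hpar h hh, hn1]
  have hdiag : qpair h h = 1 := by
    rw [qpair_self hh, hn1]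
    exact_mod_cast rfl
  by_cases hc : l = l' ∧ m = m' ∧ n = n'
  · rw [if_pos hc]
    obtain ⟨rfl, rfl, rfl⟩ := hc
    exact hdiag
  · rw [if_neg hc]
    have hp := pair_le_frameSum hN hg hpar hh hl hl' hm hm' n n' hc
    have hd2 : ‖qpair (gaborAtom M N (g l') m' n') h‖ ^ 2 = 1 := by
      rw [← hh_def, hdiag]; simp
    rw [hfs, hd2] at hp
    have hle0 : ‖qpair (gaborAtom M N (g l) m n) h‖ ^ 2 ≤ 0 := by linarith
    have h0 : ‖qpair (gaborAtom M N (g l) m n) h‖ = 0 := by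
      nlinarith [norm_nonneg (qpair (gaborAtom M N (g l) m n) h)]
    exact norm_eq_zero.1 h0

end Stmt11Aux

/-- a Parseval Gabor frame is an orthonormal basis iff `N² = L M²`. -/
theorem stmt_11 (L M N : ℕ) (hL : 0 < L) (hM : 0 < M) (hN : 0 < N)
    (g : ℕ → ℤ × ℤ → ℍ) (hg : ∀ l < L, MemL2 (g l))
    (hpar : IsParseval L M N g) :
    IsON L M N g ↔ N ^ 2 = L * M ^ 2 := by
  constructor
  · exact fun hON => Stmt11Aux.on_forward hL hM hN hg hpar hON
  · exact fun hNLM => Stmt11Aux.on_backward hL hM hN hg hpar hNLM
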